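/- For any ring R, the following conditions are equivalent: (1) every non-faithful left R-module is semiartinian; (2) every non-faithful left R-module is an essential extension of its socle; (3) every nonzero non-faithful left R-module contains a simple submodule; (4) R/I is a left semiartinian ring for every nonzero two-sided ideal I of R; (5) for every proper left ideal L of R with nonzero core, the cyclic left R-module R/L contains a simple submodule. -/

import Mathlib

section helpers
universe u

section Transfer
variable {R A M : Type*} [Ring R] [Ring A] [AddCommGroup M]

def submoduleOrderIso [Module R M] [Module A M] (f : R →+* A)
    (hf : Function.Surjective f) (h : ∀ (r : R) (m : M), r • m = f r • m) :
    Submodule R M ≃o Submodule A M where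
  toFun S :=
    { carrier := S
      add_mem' := fun ha hb => S.add_mem ha hb
      zero_mem' := S.zero_mem
      smul_mem' := fun a x hx => by
        obtain ⟨r, rfl⟩ := hf a
        rw [← h]; exact S.smul_mem r hx }
  invFun T :=
    { carrier := T
      add_mem' := fun ha hb => T.add_mem ha hb
      zero_mem' := T.zero_mem
      smul_mem' := fun r x hx => by rw [h]; exact T.smul_mem (f r) hx }
  left_inv S := by ext x; rfl
  right_inv T := by ext x; rfl
  map_rel_iff' := Iff.rfl

lemma exists_simple_transfer [Module R M] [Module A M] (f : R →+* A)
    (hf : Function.Surjective f) (h : ∀ (r : R) (m : M), r • m = f r • m) :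
    (∃ S : Submodule R M, IsSimpleModule R S) ↔ ∃ S : Submodule A M, IsSimpleModule A S := by
  simp_rw [isSimpleModule_iff_isAtom]
  constructor
  · rintro ⟨S, hS⟩
    exact ⟨submoduleOrderIso f hf h S, ((submoduleOrderIso f hf h).isAtom_iff S).mpr hS⟩
  · rintro ⟨S, hS⟩
    refine ⟨(submoduleOrderIso f hf h).symm S, ?_⟩
    rw [← (submoduleOrderIso f hf h).isAtom_iff]
    simpa using hS

end Transfer

lemma map_simple {R M N : Type*} [Ring R] [AddCommGroup M] [AddCommGroup N] [Module R M]
    [Module R N] (g : M →ₗ[R] N) (hg : Function.Injective g) (S : Submodule R M)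
    (hS : IsSimpleModule R S) : IsSimpleModule R (S.map g) := by
  haveI := hS
  exact IsSimpleModule.congr (Submodule.equivMapOfInjective g hg S).symm

lemma bot_ne_top' {R M : Type*} [Ring R] [AddCommGroup M] [Module R M] [Nontrivial M] :
    (⊥ : Submodule R M) ≠ ⊤ := by
  intro h
  obtain ⟨m, hm⟩ := exists_ne (0 : M)
  have : m ∈ (⊥ : Submodule R M) := by rw [h]; trivial
  exact hm (by simpa using this)


end helpers


universe u

/-- A module is *semiartinian* if every nonzero quotient contains a simple submodule. -/
def IsSemiartinianModule (R : Type u) (M : Type u) [Ring R] [AddCommGroup M]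
    [Module R M] : Prop :=
  ∀ N : Submodule R M, N ≠ ⊤ → ∃ S : Submodule R (M ⧸ N), IsSimpleModule R S

/-- The *socle* of a module: the sum of all its simple submodules. -/
def moduleSocle (R : Type u) (M : Type u) [Ring R] [AddCommGroup M] [Module R M] :
    Submodule R M :=
  sSup {S : Submodule R M | IsSimpleModule R S}

/-- A ring is *left semiartinian* if every nonzero left module contains a simple
submodule. -/
def IsLeftSemiartinianRing (A : Type u) [Ring A] : Prop :=
  ∀ (M : Type u) (_ : AddCommGroup M) (_ : Module A M), Nontrivial M →
    ∃ S : Submodule A M, IsSimpleModule A S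

/-- The equivalent conditions on non-faithful left modules over an arbitrary ring:
(1) every non-faithful left module is semiartinian;
(2) every non-faithful left module is an essential extension of its socle;
(3) every nonzero non-faithful left module contains a simple submodule;
(4) `R/I` is left semiartinian for every nonzero two-sided ideal `I`;
(5) for every proper left ideal `L` with nonzero core, `R/L` contains a simple
submodule. -/
theorem stmt5 (R : Type u) [Ring R] :
    [ (∀ (M : Type u) (_ : AddCommGroup M) (_ : Module R M),
        (∃ r : R, r ≠ 0 ∧ ∀ m : M, r • m = 0) → IsSemiartinianModule R M),
      (∀ (M : Type u) (_ : AddCommGroup M) (_ : Module R M),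
        (∃ r : R, r ≠ 0 ∧ ∀ m : M, r • m = 0) →
          ∀ P : Submodule R M, P ≠ ⊥ → moduleSocle R M ⊓ P ≠ ⊥),
      (∀ (M : Type u) (_ : AddCommGroup M) (_ : Module R M),
        (∃ r : R, r ≠ 0 ∧ ∀ m : M, r • m = 0) → Nontrivial M →
          ∃ S : Submodule R M, IsSimpleModule R S),
      (∀ I : TwoSidedIdeal R, I ≠ ⊥ → IsLeftSemiartinianRing I.ringCon.Quotient),
      (∀ L : Ideal R, L ≠ ⊤ → (∃ r : R, r ≠ 0 ∧ ∀ x : R, r * x ∈ L) →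
          ∃ S : Submodule R (R ⧸ L), IsSimpleModule R S) ].TFAE := by
  tfae_have 1 → 3
  · intro h M _ _ hr hM
    obtain ⟨S, hS⟩ := h M _ _ hr ⊥ bot_ne_top'
    exact ⟨S.map (Submodule.quotEquivOfEqBot (⊥ : Submodule R M) rfl).toLinearMap,
      map_simple _ (Submodule.quotEquivOfEqBot (⊥ : Submodule R M) rfl).injective S hS⟩
  tfae_have 3 → 1
  · intro h M _ _ hr N hN
    haveI := (Submodule.Quotient.nontrivial_iff (p := N)).mpr hN
    obtain ⟨r, hr0, hr2⟩ := hr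
    refine h _ _ _ ⟨r, hr0, fun m => ?_⟩ this
    obtain ⟨x, rfl⟩ := Submodule.Quotient.mk_surjective N m
    rw [← Submodule.Quotient.mk_smul, hr2 x, Submodule.Quotient.mk_zero]
  tfae_have 3 → 2
  · intro h M _ _ hr P hP
    haveI : Nontrivial P := Submodule.nontrivial_iff_ne_bot.mpr hP
    obtain ⟨r, hr0, hr2⟩ := hr
    obtain ⟨S, hS⟩ := h P _ _ ⟨r, hr0, fun p => Subtype.ext (by simp [hr2])⟩ ‹_›
    have hS' := map_simple P.subtype P.injective_subtype S hS
    have h1 : S.map P.subtype ≤ moduleSocle R M := le_sSup hS'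
    have h2 : S.map P.subtype ≤ P := Submodule.map_subtype_le P S
    intro hcon
    exact (isSimpleModule_iff_isAtom.mp hS').1
      (by rw [← le_bot_iff, ← hcon]; exact le_inf h1 h2)
  tfae_have 2 → 3
  · intro h M _ _ hr hM
    have := h M _ _ hr ⊤ (Ne.symm bot_ne_top')
    by_contra hc
    push_neg at hc
    apply this
    have : {S : Submodule R M | IsSimpleModule R S} = ∅ :=
      Set.eq_empty_iff_forall_notMem.mpr hc
    rw [moduleSocle, this, sSup_empty, bot_inf_eq]
  tfae_have 3 → 5
  · intro h L hL hcore
    haveI := (Submodule.Quotient.nontrivial_iff (p := L)).mpr hL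
    obtain ⟨r, hr0, hr2⟩ := hcore
    refine h _ _ _ ⟨r, hr0, fun m => ?_⟩ this
    obtain ⟨x, rfl⟩ := Submodule.Quotient.mk_surjective L m
    rw [← Submodule.Quotient.mk_smul]
    exact (Submodule.Quotient.mk_eq_zero L).mpr (hr2 x)
  tfae_have 5 → 4
  · intro h I hI M _ _ hM
    let f : R →+* I.ringCon.Quotient := I.ringCon.mk'
    have hf : Function.Surjective f := fun a => Quotient.inductionOn' a fun r => ⟨r, rfl⟩
    letI : Module R M := Module.compHom M f
    have h_compat : ∀ (r : R) (m : M), r • m = f r • m := fun _ _ => rfl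
    have : ∃ x ∈ I, x ≠ 0 := by
      by_contra hc
      push_neg at hc
      apply hI
      refine SetLike.ext fun x => ?_
      rw [TwoSidedIdeal.mem_bot]
      exact ⟨hc x, fun hx => hx ▸ I.zero_mem⟩
    obtain ⟨r0, hr0I, hr0⟩ := this
    obtain ⟨m0, hm0⟩ := exists_ne (0 : M)
    set L : Ideal R := LinearMap.ker (LinearMap.toSpanSingleton R M m0) with hLdef
    have hL : L ≠ ⊤ := by
      intro hc
      apply hm0
      have h1 : (1 : R) ∈ L := by rw [hc]; trivial
      rw [hLdef, LinearMap.mem_ker, LinearMap.toSpanSingleton_apply, one_smul] at h1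
      exact h1
    have hfr0 : f r0 = 0 := by
      have : I.ringCon r0 0 := (TwoSidedIdeal.mem_iff I r0).mp hr0I
      simpa [f] using (RingCon.eq I.ringCon).mpr this
    obtain ⟨S, hS⟩ := h L hL ⟨r0, hr0, fun x => by
      rw [LinearMap.mem_ker, LinearMap.toSpanSingleton_apply, mul_smul,
        h_compat r0 (x • m0), hfr0, zero_smul]⟩
    let g : (R ⧸ L) →ₗ[R] M := L.liftQ (LinearMap.toSpanSingleton R M m0) le_rfl
    have hg : Function.Injective g :=
      LinearMap.ker_eq_bot.mp (Submodule.ker_liftQ_eq_bot' L _ hLdef)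
    exact (exists_simple_transfer f hf h_compat).mp ⟨S.map g, map_simple g hg S hS⟩
  tfae_have 4 → 3
  · intro h M _ _ hr hM
    obtain ⟨r0, hr0, hann⟩ := hr
    set I : TwoSidedIdeal R := TwoSidedIdeal.mk' {r : R | ∀ m : M, r • m = 0}
      (fun m => zero_smul R m)
      (fun {x y} hx hy m => by rw [add_smul, hx m, hy m, add_zero])
      (fun {x} hx m => by rw [neg_smul, hx m, neg_zero])
      (fun {x y} hy m => by rw [mul_smul, hy m, smul_zero])
      (fun {x y} hx m => by rw [mul_smul]; exact hx (y • m)) with hIdef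
    have memI : ∀ r : R, r ∈ I ↔ ∀ m : M, r • m = 0 := fun r =>
      TwoSidedIdeal.mem_mk' _ _ _ _ _ _ r
    have hI : I ≠ ⊥ := by
      intro hc
      exact hr0 ((TwoSidedIdeal.mem_bot R).mp (hc ▸ (memI r0).mpr hann))
    letI smulA : SMul I.ringCon.Quotient M :=
      ⟨fun a m => Quotient.liftOn' a (· • m) (fun r s hrs => by
        have h1 : r - s ∈ I := (TwoSidedIdeal.rel_iff I r s).mp hrs
        have h2 := (memI _).mp h1 m
        rw [sub_smul, sub_eq_zero] at h2
        exact h2)⟩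
    letI modA : Module I.ringCon.Quotient M :=
      { smul := smulA.smul
        one_smul := fun m => show (1 : R) • m = m from one_smul R m
        mul_smul := fun a b m => Quotient.inductionOn₂' a b fun r s =>
          show (r * s) • m = r • s • m from mul_smul r s m
        smul_zero := fun a => Quotient.inductionOn' a fun r =>
          show r • (0 : M) = 0 from smul_zero r
        smul_add := fun a m n => Quotient.inductionOn' a fun r =>
          show r • (m + n) = r • m + r • n from smul_add r m n
        add_smul := fun a b m => Quotient.inductionOn₂' a b fun r s =>
          show (r + s) • m = r • m + s • m from add_smul r s m
        zero_smul := fun m => show (0 : R) • m = 0 from zero_smul R m }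
    obtain ⟨S, hS⟩ := h I hI M ‹_› modA hM
    have hf : Function.Surjective I.ringCon.mk' := fun a =>
      Quotient.inductionOn' a fun r => ⟨r, rfl⟩
    have h_compat : ∀ (r : R) (m : M), r • m = I.ringCon.mk' r • m := fun _ _ => rfl
    exact (exists_simple_transfer I.ringCon.mk' hf h_compat).mpr ⟨S, hS⟩
  tfae_finish
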